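/- Let L > 0 and [a, b] ⊆ [0, L] with a < b. For every ρ ∈ (0, min(ρ_L^*, 4π²/(b−a)²)) and every x ∈ [0, L]: F_{a,b}(x, ρ, L) ≤ (b − a)(1+ρ) · (4π²/(4π² − ρ(b−a)²)) · ( (Si(ρL², 1) + (b+1)/L) / ((1−ρ)·Si(ρL², 1) + 2·Co(ρL², 1)/L) ) · (x + 1) + Q_{a,b}(x). -/

import Mathlib

open MeasureTheory ProbabilityTheory Real Filter Set
open scoped ENNReal NNReal

noncomputable section

/-- The standard Laplace distribution on `ℝ`, with density `t ↦ (1/2)·e^{−|t|}`. -/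
def lapMeasure : Measure ℝ :=
  MeasureTheory.volume.withDensity fun t => ENNReal.ofReal ((1 / 2) * Real.exp (-|t|))

variable {Ω : Type*} [MeasurableSpace Ω]

/-- `(X i)` are i.i.d. standard Laplace random variables on the probability space `(Ω, μ)`. -/
structure IsLaplaceWalk (μ : Measure Ω) (X : ℕ → Ω → ℝ) : Prop where
  prob : IsProbabilityMeasure μ
  meas : ∀ i, Measurable (X i)
  indep : iIndepFun X μ
  dist : ∀ i, μ.map (X i) = lapMeasure

/-- The random walk `S_k = x + X_1 + ⋯ + X_k` started at `x`. -/
def walk (x : ℝ) (X : ℕ → Ω → ℝ) (k : ℕ) (ω : Ω) : ℝ :=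
  x + ∑ i ∈ Finset.range k, X i ω

/-- The exit time `τ_L = min{k : S_k ∉ [0,L]}` of the walk started at `x`. -/
def exitTime (L x : ℝ) (X : ℕ → Ω → ℝ) (ω : Ω) : ℕ :=
  sInf {k | walk x X k ω ∉ Set.Icc 0 L}

/-- `ρ_L^*`: the smallest `ρ ≥ 0` with `cos(√ρ·L/2) − √ρ·sin(√ρ·L/2) = 0`. -/
def rhoStar (L : ℝ) : ℝ :=
  sInf {ρ : ℝ | 0 ≤ ρ ∧
    Real.cos (Real.sqrt ρ * L / 2) - Real.sqrt ρ * Real.sin (Real.sqrt ρ * L / 2) = 0}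

/-- `H_b^±(x, ρ, L) = E_x[Σ_{k=0}^{τ_L−1} (1+ρ)^k e^{±b S_k}]`, written as the Lebesgue
integral of `Σ_k (1+ρ)^k e^{s·b·S_k} 1{S_i ∈ [0,L] ∀ i ≤ k}` (the summand vanishes for
`k ≥ τ_L`); take `s = 1` for `H^+` and `s = −1` for `H^-`. -/
def Hfun (μ : Measure Ω) (X : ℕ → Ω → ℝ) (s b ρ L x : ℝ) : ℝ≥0∞ :=
  ∫⁻ ω, ∑' k : ℕ,
    (if ∀ i ≤ k, walk x X i ω ∈ Set.Icc 0 L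
      then ENNReal.ofReal ((1 + ρ) ^ k * Real.exp (s * b * walk x X k ω)) else 0) ∂μ

/-- Two-argument `Si`: `Si(α, y) = sin(√α·y)/√α` for `α > 0`, `y` at `α = 0`,
`sinh(√|α|·y)/√|α|` for `α < 0`. -/
def Si2 (α y : ℝ) : ℝ :=
  if 0 < α then Real.sin (Real.sqrt α * y) / Real.sqrt α
  else if α = 0 then y
  else Real.sinh (Real.sqrt |α| * y) / Real.sqrt |α|

/-- Two-argument `Co`: `Co(α, y) = cos(√α·y)` for `α > 0`, `1` at `α = 0`,
`cosh(√|α|·y)` for `α < 0`. -/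
def Co2 (α y : ℝ) : ℝ :=
  if 0 < α then Real.cos (Real.sqrt α * y)
  else if α = 0 then 1
  else Real.cosh (Real.sqrt |α| * y)

/-- `Q_{a,b}(x) = 1 − cos(2π(x−a)/(b−a))` on `[a,b]`, and `0` elsewhere. -/
def Qfun (a b x : ℝ) : ℝ :=
  if x ∈ Set.Icc a b then 1 - Real.cos (2 * Real.pi * (x - a) / (b - a)) else 0

/-- `F_{a,b}(x, ρ, L) = E_x[Σ_{k=0}^{τ_L−1} (1+ρ)^k Q_{a,b}(S_k)]`, written as the Lebesgue
integral of `Σ_k (1+ρ)^k Q_{a,b}(S_k) 1{S_i ∈ [0,L] ∀ i ≤ k}` (the summand vanishes for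
`k ≥ τ_L`). -/
def Ffun (μ : Measure Ω) (X : ℕ → Ω → ℝ) (a b ρ L x : ℝ) : ℝ≥0∞ :=
  ∫⁻ ω, ∑' k : ℕ,
    (if ∀ i ≤ k, walk x X i ω ∈ Set.Icc 0 L
      then ENNReal.ofReal ((1 + ρ) ^ k * Qfun a b (walk x X k ω)) else 0) ∂μ

-- ===================== auxiliary definitions =====================

def ffA (ρ u : ℝ) : ℝ := Real.sin (Real.sqrt ρ * u) / Real.sqrt ρ + Real.cos (Real.sqrt ρ * u)

def ffDA (ρ u : ℝ) : ℝ := Real.cos (Real.sqrt ρ * u) - Real.sqrt ρ * Real.sin (Real.sqrt ρ * u)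

def DDc (ρ L : ℝ) : ℝ :=
  (1 - ρ) * (Real.sin (Real.sqrt ρ * L) / Real.sqrt ρ) + 2 * Real.cos (Real.sqrt ρ * L)

def AAi (a b ρ y : ℝ) : ℝ := ∫ s in a..y, Real.cos (Real.sqrt ρ * s) * Qfun a b s

def BBi (a b ρ y : ℝ) : ℝ := ∫ s in a..y, Real.sin (Real.sqrt ρ * s) * Qfun a b s

def ppf (a b ρ y : ℝ) : ℝ :=
  -((1 + ρ) / Real.sqrt ρ) *
    (Real.sin (Real.sqrt ρ * y) * AAi a b ρ y - Real.cos (Real.sqrt ρ * y) * BBi a b ρ y)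

def ppDf (a b ρ y : ℝ) : ℝ :=
  -(1 + ρ) *
    (Real.cos (Real.sqrt ρ * y) * AAi a b ρ y + Real.sin (Real.sqrt ρ * y) * BBi a b ρ y)

def CCc (a b ρ L : ℝ) : ℝ := (1 + ρ) / DDc ρ L * ∫ s in a..b, ffA ρ (L - s) * Qfun a b s

def phiF (a b ρ L y : ℝ) : ℝ := CCc a b ρ L * ffA ρ y + ppf a b ρ y

def phiDF (a b ρ L y : ℝ) : ℝ := CCc a b ρ L * ffDA ρ y + ppDf a b ρ y

def GGf (a b ρ L y : ℝ) : ℝ := if y ∈ Set.Icc (0:ℝ) L then Qfun a b y + phiF a b ρ L y else 0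

lemma Qfun_nonneg (a b x : ℝ) : 0 ≤ Qfun a b x := by
  unfold Qfun; split
  · nlinarith [Real.cos_le_one (2 * Real.pi * (x - a) / (b - a))]
  · exact le_rfl

lemma Qfun_le_two (a b x : ℝ) : Qfun a b x ≤ 2 := by
  unfold Qfun; split
  · nlinarith [Real.neg_one_le_cos (2 * Real.pi * (x - a) / (b - a))]
  · norm_num

lemma Qfun_of_le {a b s : ℝ} (h : s ≤ a) : Qfun a b s = 0 := by
  unfold Qfun; split
  · rename_i hs
    have : s = a := le_antisymm h hs.1
    simp [this]
  · rfl

lemma Qfun_of_ge {a b s : ℝ} (hab : a < b) (h : b ≤ s) : Qfun a b s = 0 := by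
  unfold Qfun; split
  · rename_i hs
    have hsb : s = b := le_antisymm hs.2 h
    have hba : b - a ≠ 0 := by linarith
    rw [hsb]
    rw [show 2 * Real.pi * (b - a) / (b - a) = 2 * Real.pi by field_simp]
    simp [Real.cos_two_pi]
  · rfl

lemma Qfun_eq_clamp {a b : ℝ} (hab : a < b) (x : ℝ) :
    Qfun a b x = 1 - Real.cos (2 * Real.pi * (min (max x a) b - a) / (b - a)) := by
  rcases le_or_gt x a with hxa | hxa
  · rw [Qfun_of_le hxa]
    rw [max_eq_right hxa, min_eq_left hab.le]
    simp
  rcases le_or_gt b x with hbx | hbx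
  · rw [Qfun_of_ge hab hbx]
    have hba : b - a ≠ 0 := by linarith
    rw [max_eq_left (by linarith : a ≤ x), min_eq_right (by linarith : b ≤ x)]
    rw [show 2 * Real.pi * (b - a) / (b - a) = 2 * Real.pi by field_simp]
    simp [Real.cos_two_pi]
  · have hx : x ∈ Set.Icc a b := ⟨hxa.le, hbx.le⟩
    rw [Qfun, if_pos hx, max_eq_left hxa.le, min_eq_left hbx.le]

lemma Qfun_continuous {a b : ℝ} (hab : a < b) : Continuous (Qfun a b) := by
  have : Qfun a b = fun x => 1 - Real.cos (2 * Real.pi * (min (max x a) b - a) / (b - a)) :=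
    funext (Qfun_eq_clamp hab)
  rw [this]
  fun_prop

lemma Qfun_measurable (a b : ℝ) : Measurable (Qfun a b) := by
  unfold Qfun
  exact Measurable.ite measurableSet_Icc (by fun_prop) measurable_const

lemma Qfun_integral {a b : ℝ} (hab : a < b) : ∫ s in a..b, Qfun a b s = b - a := by
  have hba : b - a ≠ 0 := by linarith
  have h1 : ∀ s ∈ Set.uIcc a b, Qfun a b s =
      1 - Real.cos (2 * Real.pi / (b - a) * (s - a)) := by
    intro s hs
    rw [Set.uIcc_of_le hab.le] at hs
    rw [Qfun, if_pos hs]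
    ring_nf
  rw [intervalIntegral.integral_congr h1]
  have hc : ∀ u : ℝ, Continuous fun s : ℝ => Real.cos (2 * Real.pi / (b - a) * (s - u)) := by
    intro u; fun_prop
  rw [intervalIntegral.integral_sub (by apply Continuous.intervalIntegrable; fun_prop)
    ((hc a).intervalIntegrable _ _)]
  have h2 : ∫ s in a..b, Real.cos (2 * Real.pi / (b - a) * (s - a)) = 0 := by
    have h3 : ∫ s in a..b, Real.cos (2 * Real.pi / (b - a) * (s - a)) =
        ∫ s in a - a..b - a, Real.cos (2 * Real.pi / (b - a) * s) := by
      rw [← intervalIntegral.integral_comp_sub_right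
        (fun s => Real.cos (2 * Real.pi / (b - a) * s)) a]
    rw [h3]
    have hc0 : (2 * Real.pi / (b - a)) ≠ 0 := by
      apply div_ne_zero _ hba
      positivity
    rw [intervalIntegral.integral_comp_mul_left (fun s => Real.cos s) hc0]
    simp only [sub_self, mul_zero]
    rw [integral_cos]
    rw [show 2 * Real.pi / (b - a) * (b - a) = 2 * Real.pi by field_simp]
    simp [Real.sin_two_pi]
  rw [h2]
  simp

section Trig

variable {ρ L : ℝ} (hρ : 0 < ρ) (hρs : ρ < rhoStar L) (hL : 0 < L)

include hρ hρs hL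

lemma root_pos : ∀ ρ' : ℝ, 0 ≤ ρ' → ρ' ≤ ρ →
    0 < Real.cos (Real.sqrt ρ' * L / 2) - Real.sqrt ρ' * Real.sin (Real.sqrt ρ' * L / 2) := by
  intro ρ' h0 hle
  by_contra hcon
  push_neg at hcon
  set F : ℝ → ℝ := fun t =>
    Real.cos (Real.sqrt t * L / 2) - Real.sqrt t * Real.sin (Real.sqrt t * L / 2) with hF
  have hFc : ContinuousOn F (Set.Icc 0 ρ') := by
    apply Continuous.continuousOn; fun_prop
  have hF0 : F 0 = 1 := by simp [hF]
  have h01 : (0:ℝ) ∈ Set.Icc (F ρ') (F 0) := by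
    constructor
    · exact hcon
    · rw [hF0]; norm_num
  have := intermediate_value_Icc' h0 hFc h01
  obtain ⟨c, hc, hFc0⟩ := this
  have hmem : c ∈ {t : ℝ | 0 ≤ t ∧
      Real.cos (Real.sqrt t * L / 2) - Real.sqrt t * Real.sin (Real.sqrt t * L / 2) = 0} :=
    ⟨hc.1, hFc0⟩
  have hbdd : BddBelow {t : ℝ | 0 ≤ t ∧
      Real.cos (Real.sqrt t * L / 2) - Real.sqrt t * Real.sin (Real.sqrt t * L / 2) = 0} :=
    ⟨0, fun z hz => hz.1⟩
  have : rhoStar L ≤ c := csInf_le hbdd hmem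
  have : rhoStar L ≤ ρ := le_trans this (le_trans hc.2 hle)
  linarith

lemma half_pi : Real.sqrt ρ * L / 2 < Real.pi / 2 := by
  by_contra hcon
  push_neg at hcon
  set ρ'' : ℝ := (Real.pi / L) ^ 2 with hρ''
  have hπL : 0 < Real.pi / L := div_pos Real.pi_pos hL
  have hs : Real.sqrt ρ'' = Real.pi / L := Real.sqrt_sq hπL.le
  have hρ''ρ : ρ'' ≤ ρ := by
    have h1 : Real.pi / L ≤ Real.sqrt ρ := by
      rw [div_le_iff₀ hL]
      nlinarith [hcon, Real.pi_pos]
    calc ρ'' = (Real.pi / L) ^ 2 := rfl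
      _ ≤ Real.sqrt ρ ^ 2 := by nlinarith
      _ = ρ := Real.sq_sqrt hρ.le
  have := root_pos hρ hρs hL ρ'' (sq_nonneg _) hρ''ρ
  rw [hs] at this
  rw [show Real.pi / L * L / 2 = Real.pi / 2 by field_simp] at this
  rw [Real.cos_pi_div_two, Real.sin_pi_div_two] at this
  simp at this
  linarith

lemma half_lt : Real.sqrt ρ * L / 2 + Real.arctan (Real.sqrt ρ) < Real.pi / 2 := by
  have hr : 0 < Real.sqrt ρ := Real.sqrt_pos.2 hρ
  set x' : ℝ := Real.sqrt ρ * L / 2 with hx'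
  have hx'0 : 0 ≤ x' := by positivity
  have hx'π : x' < Real.pi / 2 := half_pi hρ hρs hL
  have hcos : 0 < Real.cos x' := Real.cos_pos_of_mem_Ioo ⟨by linarith, hx'π⟩
  have hroot := root_pos hρ hρs hL ρ hρ.le le_rfl
  have htan : Real.tan x' < (Real.sqrt ρ)⁻¹ := by
    rw [Real.tan_eq_sin_div_cos, show (Real.sqrt ρ)⁻¹ = 1 / Real.sqrt ρ by rw [one_div],
      div_lt_div_iff₀ hcos hr]
    nlinarith [hroot]
  have h1 : x' = Real.arctan (Real.tan x') := (Real.arctan_tan (by linarith) hx'π).symm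
  have h2 : Real.arctan (Real.tan x') < Real.arctan ((Real.sqrt ρ)⁻¹) :=
    Real.arctan_strictMono htan
  rw [Real.arctan_inv_of_pos hr] at h2
  linarith [h1 ▸ h2]

lemma sqrtL_lt_pi : Real.sqrt ρ * L < Real.pi := by
  have h1 := half_lt hρ hρs hL
  have h2 : 0 < Real.arctan (Real.sqrt ρ) := by
    rw [← Real.arctan_zero]
    exact Real.arctan_strictMono (Real.sqrt_pos.2 hρ)
  linarith

lemma sin_shift_pos : ∀ x : ℝ, 0 ≤ x → x ≤ Real.sqrt ρ * L →
    0 < Real.sin x + Real.sqrt ρ * Real.cos x := by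
  intro x hx0 hxL
  have hr : 0 < Real.sqrt ρ := Real.sqrt_pos.2 hρ
  set φ : ℝ := Real.arctan (Real.sqrt ρ) with hφ
  have hφ0 : 0 < φ := by
    rw [hφ, ← Real.arctan_zero]; exact Real.arctan_strictMono hr
  have hid : Real.sin x + Real.sqrt ρ * Real.cos x =
      Real.sqrt (1 + ρ) * Real.sin (x + φ) := by
    rw [Real.sin_add, hφ, Real.cos_arctan, Real.sin_arctan]
    have h2 : Real.sqrt ρ ^ 2 = ρ := Real.sq_sqrt hρ.le
    have h3 : (0:ℝ) < Real.sqrt (1 + Real.sqrt ρ ^ 2) := by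
      rw [h2]; exact Real.sqrt_pos.2 (by linarith)
    have h4 : Real.sqrt (1 + ρ) = Real.sqrt (1 + Real.sqrt ρ ^ 2) := by rw [h2]
    rw [h4]
    field_simp
  rw [hid]
  apply mul_pos (Real.sqrt_pos.2 (by linarith))
  apply Real.sin_pos_of_pos_of_lt_pi
  · linarith
  · have := half_lt hρ hρs hL
    linarith

lemma ffA_pos : ∀ u ∈ Set.Icc (0:ℝ) L, 0 < ffA ρ u := by
  intro u hu
  have hr : 0 < Real.sqrt ρ := Real.sqrt_pos.2 hρ
  have hr0 : 0 < Real.sqrt ρ := Real.sqrt_pos.2 hρ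
  have := sin_shift_pos hρ hρs hL (Real.sqrt ρ * u)
    (mul_nonneg hr0.le hu.1) (by nlinarith [hu.2, hu.1])
  unfold ffA
  rw [div_add' _ _ _ hr.ne']
  exact div_pos (by linarith) hr

lemma DD_pos : 0 < DDc ρ L := by
  have hr : 0 < Real.sqrt ρ := Real.sqrt_pos.2 hρ
  set x' : ℝ := Real.sqrt ρ * L / 2 with hx'
  have hkey : Real.sqrt ρ * DDc ρ L =
      2 * (Real.cos x' - Real.sqrt ρ * Real.sin x') *
        (Real.sin x' + Real.sqrt ρ * Real.cos x') := by
    have h2 : Real.sqrt ρ ^ 2 = ρ := Real.sq_sqrt hρ.le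
    have hT : Real.sqrt ρ * L = 2 * x' := by rw [hx']; ring
    unfold DDc
    rw [hT, Real.sin_two_mul, Real.cos_two_mul]
    field_simp
    linear_combination (Real.sqrt ρ) * (Real.sin_sq_add_cos_sq x') +
      (Real.sin x' * Real.cos x') * h2
  have h1 := root_pos hρ hρs hL ρ hρ.le le_rfl
  have h2 := sin_shift_pos hρ hρs hL x' (by positivity) (by rw [hx']; nlinarith [hL, hr])
  have h3 : 0 < Real.sqrt ρ * DDc ρ L := by
    rw [hkey]
    have : 0 < Real.cos x' - Real.sqrt ρ * Real.sin x' := h1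
    positivity
  nlinarith [h3, hr]

lemma ffA_nonneg : ∀ u ∈ Set.Icc (0:ℝ) L, 0 ≤ ffA ρ u :=
  fun u hu => (ffA_pos hρ hρs hL u hu).le

lemma green_pt {s y : ℝ} (hs : 0 ≤ s) (hsy : s ≤ y) (hyL : y ≤ L) :
    Real.sin (Real.sqrt ρ * (y - s)) / Real.sqrt ρ ≤ ffA ρ y * ffA ρ (L - s) / DDc ρ L := by
  have hr : 0 < Real.sqrt ρ := Real.sqrt_pos.2 hρ
  have hD : 0 < DDc ρ L := DD_pos hρ hρs hL
  have h2 : Real.sqrt ρ ^ 2 = ρ := Real.sq_sqrt hρ.le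
  have hid : DDc ρ L * (Real.sin (Real.sqrt ρ * (y - s)) / Real.sqrt ρ) =
      ffA ρ y * ffA ρ (L - s) - ffA ρ s * ffA ρ (L - y) := by
    unfold DDc ffA
    rw [show Real.sqrt ρ * (y - s) = Real.sqrt ρ * y - Real.sqrt ρ * s by ring,
      show Real.sqrt ρ * (L - s) = Real.sqrt ρ * L - Real.sqrt ρ * s by ring,
      show Real.sqrt ρ * (L - y) = Real.sqrt ρ * L - Real.sqrt ρ * y by ring]
    rw [Real.sin_sub, Real.sin_sub, Real.sin_sub, Real.cos_sub, Real.cos_sub]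
    field_simp
    linear_combination (Real.sin (Real.sqrt ρ * L) *
      (Real.sin (Real.sqrt ρ * y) * Real.cos (Real.sqrt ρ * s) -
        Real.cos (Real.sqrt ρ * y) * Real.sin (Real.sqrt ρ * s))) * h2
  have hnn : 0 ≤ ffA ρ s * ffA ρ (L - y) :=
    mul_nonneg (ffA_nonneg hρ hρs hL s ⟨hs, by linarith⟩)
      (ffA_nonneg hρ hρs hL (L - y) ⟨by linarith, by linarith⟩)
  rw [le_div_iff₀ hD, mul_comm]
  nlinarith [hid, hnn]

end Trig

lemma ffA_le_add_one {ρ : ℝ} (hρ : 0 < ρ) {u : ℝ} (hu : 0 ≤ u) : ffA ρ u ≤ u + 1 := by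
  have hr : 0 < Real.sqrt ρ := Real.sqrt_pos.2 hρ
  unfold ffA
  have h1 : Real.sin (Real.sqrt ρ * u) ≤ Real.sqrt ρ * u := Real.sin_le (by positivity)
  have h2 : Real.sin (Real.sqrt ρ * u) / Real.sqrt ρ ≤ u := by
    rw [div_le_iff₀ hr]; nlinarith
  nlinarith [Real.cos_le_one (Real.sqrt ρ * u)]


-- ===================== derivative lemmas =====================

section Deriv

variable {a b ρ L : ℝ} (hρ : 0 < ρ) (hab : a < b)

lemma hasDerivAt_rmul (ρ y : ℝ) : HasDerivAt (fun u : ℝ => Real.sqrt ρ * u) (Real.sqrt ρ) y := by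
  simpa using (hasDerivAt_id y).const_mul (Real.sqrt ρ)

include hρ

lemma hasDerivAt_ffA (y : ℝ) : HasDerivAt (ffA ρ) (ffDA ρ y) y := by
  have hr : 0 < Real.sqrt ρ := Real.sqrt_pos.2 hρ
  have h1 : HasDerivAt (fun u => Real.sin (Real.sqrt ρ * u))
      (Real.cos (Real.sqrt ρ * y) * Real.sqrt ρ) y :=
    (Real.hasDerivAt_sin _).comp y (hasDerivAt_rmul ρ y)
  have h2 : HasDerivAt (fun u => Real.cos (Real.sqrt ρ * u))
      (-Real.sin (Real.sqrt ρ * y) * Real.sqrt ρ) y :=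
    (Real.hasDerivAt_cos _).comp y (hasDerivAt_rmul ρ y)
  have := (h1.div_const (Real.sqrt ρ)).add h2
  refine this.congr_deriv ?_
  symm
  unfold ffDA
  field_simp
  ring

lemma hasDerivAt_ffDA (y : ℝ) : HasDerivAt (ffDA ρ) (-ρ * ffA ρ y) y := by
  have hr : 0 < Real.sqrt ρ := Real.sqrt_pos.2 hρ
  have hsq : Real.sqrt ρ ^ 2 = ρ := Real.sq_sqrt hρ.le
  have h1 : HasDerivAt (fun u => Real.sin (Real.sqrt ρ * u))
      (Real.cos (Real.sqrt ρ * y) * Real.sqrt ρ) y :=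
    (Real.hasDerivAt_sin _).comp y (hasDerivAt_rmul ρ y)
  have h2 : HasDerivAt (fun u => Real.cos (Real.sqrt ρ * u))
      (-Real.sin (Real.sqrt ρ * y) * Real.sqrt ρ) y :=
    (Real.hasDerivAt_cos _).comp y (hasDerivAt_rmul ρ y)
  have := h2.sub ((h1.const_mul (Real.sqrt ρ)))
  refine this.congr_deriv ?_
  symm
  unfold ffA
  field_simp
  linear_combination (Real.sin (Real.sqrt ρ * y) + Real.cos (Real.sqrt ρ * y) * Real.sqrt ρ) * hsq

include hab

lemma hasDerivAt_AAi (y : ℝ) :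
    HasDerivAt (AAi a b ρ) (Real.cos (Real.sqrt ρ * y) * Qfun a b y) y := by
  have hc : Continuous fun s => Real.cos (Real.sqrt ρ * s) * Qfun a b s :=
    (by fun_prop : Continuous fun s => Real.cos (Real.sqrt ρ * s)).mul (Qfun_continuous hab)
  exact intervalIntegral.integral_hasDerivAt_right (hc.intervalIntegrable _ _)
    (hc.stronglyMeasurableAtFilter _ _) hc.continuousAt

lemma hasDerivAt_BBi (y : ℝ) :
    HasDerivAt (BBi a b ρ) (Real.sin (Real.sqrt ρ * y) * Qfun a b y) y := by
  have hc : Continuous fun s => Real.sin (Real.sqrt ρ * s) * Qfun a b s :=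
    (by fun_prop : Continuous fun s => Real.sin (Real.sqrt ρ * s)).mul (Qfun_continuous hab)
  exact intervalIntegral.integral_hasDerivAt_right (hc.intervalIntegrable _ _)
    (hc.stronglyMeasurableAtFilter _ _) hc.continuousAt

lemma hasDerivAt_ppf (y : ℝ) : HasDerivAt (ppf a b ρ) (ppDf a b ρ y) y := by
  have hr : 0 < Real.sqrt ρ := Real.sqrt_pos.2 hρ
  have h1 : HasDerivAt (fun u => Real.sin (Real.sqrt ρ * u))
      (Real.cos (Real.sqrt ρ * y) * Real.sqrt ρ) y :=
    (Real.hasDerivAt_sin _).comp y (hasDerivAt_rmul ρ y)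
  have h2 : HasDerivAt (fun u => Real.cos (Real.sqrt ρ * u))
      (-Real.sin (Real.sqrt ρ * y) * Real.sqrt ρ) y :=
    (Real.hasDerivAt_cos _).comp y (hasDerivAt_rmul ρ y)
  have hA := hasDerivAt_AAi hρ hab y
  have hB := hasDerivAt_BBi hρ hab y
  have := (((h1.mul hA).sub (h2.mul hB)).const_mul (-((1 + ρ) / Real.sqrt ρ)))
  refine this.congr_deriv ?_
  symm
  unfold ppDf
  field_simp
  ring

lemma hasDerivAt_ppDf (y : ℝ) :
    HasDerivAt (ppDf a b ρ) (-(1 + ρ) * Qfun a b y - ρ * ppf a b ρ y) y := by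
  have hr : 0 < Real.sqrt ρ := Real.sqrt_pos.2 hρ
  have hsq : Real.sqrt ρ ^ 2 = ρ := Real.sq_sqrt hρ.le
  have h1 : HasDerivAt (fun u => Real.sin (Real.sqrt ρ * u))
      (Real.cos (Real.sqrt ρ * y) * Real.sqrt ρ) y :=
    (Real.hasDerivAt_sin _).comp y (hasDerivAt_rmul ρ y)
  have h2 : HasDerivAt (fun u => Real.cos (Real.sqrt ρ * u))
      (-Real.sin (Real.sqrt ρ * y) * Real.sqrt ρ) y :=
    (Real.hasDerivAt_cos _).comp y (hasDerivAt_rmul ρ y)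
  have hA := hasDerivAt_AAi hρ hab y
  have hB := hasDerivAt_BBi hρ hab y
  have := (((h2.mul hA).add (h1.mul hB)).const_mul (-(1 + ρ)))
  refine this.congr_deriv ?_
  symm
  have hpyth := Real.sin_sq_add_cos_sq (Real.sqrt ρ * y)
  unfold ppf
  field_simp
  linear_combination (Qfun a b y * Real.sqrt ρ) * hpyth +
    ((Real.cos (Real.sqrt ρ * y) * BBi a b ρ y -
      Real.sin (Real.sqrt ρ * y) * AAi a b ρ y)) * hsq

lemma hasDerivAt_phiF (y : ℝ) : HasDerivAt (phiF a b ρ L) (phiDF a b ρ L y) y := by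
  exact ((hasDerivAt_ffA hρ y).const_mul (CCc a b ρ L)).add (hasDerivAt_ppf hρ hab y)

lemma hasDerivAt_phiDF (y : ℝ) :
    HasDerivAt (phiDF a b ρ L) (-ρ * phiF a b ρ L y - (1 + ρ) * Qfun a b y) y := by
  have := ((hasDerivAt_ffDA hρ y).const_mul (CCc a b ρ L)).add (hasDerivAt_ppDf hρ hab y)
  refine this.congr_deriv ?_
  symm
  unfold phiF
  ring

lemma continuous_phiF : Continuous (phiF a b ρ L) :=
  continuous_iff_continuousAt.2 fun y => (hasDerivAt_phiF hρ hab y).continuousAt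

lemma continuous_phiDF : Continuous (phiDF a b ρ L) :=
  continuous_iff_continuousAt.2 fun y => (hasDerivAt_phiDF hρ hab y).continuousAt

end Deriv

-- ===================== integral identities =====================

section IntId

variable {a b ρ L : ℝ} (hρ : 0 < ρ) (hab : a < b)

lemma AAi_of_le {y : ℝ} (hy : y ≤ a) : AAi a b ρ y = 0 := by
  have h : Set.EqOn (fun s => Real.cos (Real.sqrt ρ * s) * Qfun a b s) (fun _ => (0:ℝ))
      (Set.uIcc a y) := by
    intro s hs
    rw [Set.uIcc_of_ge hy] at hs
    simp [Qfun_of_le hs.2]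
  unfold AAi
  rw [intervalIntegral.integral_congr h]
  simp

lemma BBi_of_le {y : ℝ} (hy : y ≤ a) : BBi a b ρ y = 0 := by
  have h : Set.EqOn (fun s => Real.sin (Real.sqrt ρ * s) * Qfun a b s) (fun _ => (0:ℝ))
      (Set.uIcc a y) := by
    intro s hs
    rw [Set.uIcc_of_ge hy] at hs
    simp [Qfun_of_le hs.2]
  unfold BBi
  rw [intervalIntegral.integral_congr h]
  simp

include hab

lemma AAi_of_ge {y : ℝ} (hy : b ≤ y) : AAi a b ρ y = AAi a b ρ b := by
  have hc : Continuous fun s => Real.cos (Real.sqrt ρ * s) * Qfun a b s :=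
    (by fun_prop : Continuous fun s => Real.cos (Real.sqrt ρ * s)).mul (Qfun_continuous hab)
  have h0 : (∫ s in b..y, Real.cos (Real.sqrt ρ * s) * Qfun a b s) = 0 := by
    have h : Set.EqOn (fun s => Real.cos (Real.sqrt ρ * s) * Qfun a b s) (fun _ => (0:ℝ))
        (Set.uIcc b y) := by
      intro s hs
      rw [Set.uIcc_of_le hy] at hs
      simp [Qfun_of_ge hab hs.1]
    rw [intervalIntegral.integral_congr h]
    simp
  have := intervalIntegral.integral_add_adjacent_intervals (μ := MeasureTheory.volume)
    (hc.intervalIntegrable a b) (hc.intervalIntegrable b y)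
  unfold AAi
  rw [← this, h0, add_zero]

lemma BBi_of_ge {y : ℝ} (hy : b ≤ y) : BBi a b ρ y = BBi a b ρ b := by
  have hc : Continuous fun s => Real.sin (Real.sqrt ρ * s) * Qfun a b s :=
    (by fun_prop : Continuous fun s => Real.sin (Real.sqrt ρ * s)).mul (Qfun_continuous hab)
  have h0 : (∫ s in b..y, Real.sin (Real.sqrt ρ * s) * Qfun a b s) = 0 := by
    have h : Set.EqOn (fun s => Real.sin (Real.sqrt ρ * s) * Qfun a b s) (fun _ => (0:ℝ))
        (Set.uIcc b y) := by
      intro s hs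
      rw [Set.uIcc_of_le hy] at hs
      simp [Qfun_of_ge hab hs.1]
    rw [intervalIntegral.integral_congr h]
    simp
  have := intervalIntegral.integral_add_adjacent_intervals (μ := MeasureTheory.volume)
    (hc.intervalIntegrable a b) (hc.intervalIntegrable b y)
  unfold BBi
  rw [← this, h0, add_zero]

include hρ

lemma ppf_eq_integral (y : ℝ) :
    ppf a b ρ y =
      -(1 + ρ) * ∫ s in a..y, Real.sin (Real.sqrt ρ * (y - s)) / Real.sqrt ρ * Qfun a b s := by
  have hr : 0 < Real.sqrt ρ := Real.sqrt_pos.2 hρ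
  have hcA : Continuous fun s => Real.cos (Real.sqrt ρ * s) * Qfun a b s :=
    (by fun_prop : Continuous fun s => Real.cos (Real.sqrt ρ * s)).mul (Qfun_continuous hab)
  have hcB : Continuous fun s => Real.sin (Real.sqrt ρ * s) * Qfun a b s :=
    (by fun_prop : Continuous fun s => Real.sin (Real.sqrt ρ * s)).mul (Qfun_continuous hab)
  have h1 : (∫ s in a..y, Real.sin (Real.sqrt ρ * (y - s)) / Real.sqrt ρ * Qfun a b s) =
      ∫ s in a..y, (Real.sin (Real.sqrt ρ * y) / Real.sqrt ρ *
          (Real.cos (Real.sqrt ρ * s) * Qfun a b s) -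
        Real.cos (Real.sqrt ρ * y) / Real.sqrt ρ *
          (Real.sin (Real.sqrt ρ * s) * Qfun a b s)) := by
    apply intervalIntegral.integral_congr
    intro s _
    dsimp only
    rw [show Real.sqrt ρ * (y - s) = Real.sqrt ρ * y - Real.sqrt ρ * s by ring, Real.sin_sub]
    field_simp
    try ring
  rw [h1, intervalIntegral.integral_sub ((hcA.intervalIntegrable a y).const_mul _)
    ((hcB.intervalIntegrable a y).const_mul _),
    intervalIntegral.integral_const_mul, intervalIntegral.integral_const_mul]
  unfold ppf AAi BBi
  field_simp
  try ring

lemma Ib_eq :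
    (∫ s in a..b, ffA ρ (L - s) * Qfun a b s) =
      (Real.sin (Real.sqrt ρ * L) / Real.sqrt ρ + Real.cos (Real.sqrt ρ * L)) * AAi a b ρ b +
      (Real.sin (Real.sqrt ρ * L) - Real.cos (Real.sqrt ρ * L) / Real.sqrt ρ) * BBi a b ρ b := by
  have hr : 0 < Real.sqrt ρ := Real.sqrt_pos.2 hρ
  have hcA : Continuous fun s => Real.cos (Real.sqrt ρ * s) * Qfun a b s :=
    (by fun_prop : Continuous fun s => Real.cos (Real.sqrt ρ * s)).mul (Qfun_continuous hab)
  have hcB : Continuous fun s => Real.sin (Real.sqrt ρ * s) * Qfun a b s :=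
    (by fun_prop : Continuous fun s => Real.sin (Real.sqrt ρ * s)).mul (Qfun_continuous hab)
  have h1 : (∫ s in a..b, ffA ρ (L - s) * Qfun a b s) =
      ∫ s in a..b, ((Real.sin (Real.sqrt ρ * L) / Real.sqrt ρ + Real.cos (Real.sqrt ρ * L)) *
          (Real.cos (Real.sqrt ρ * s) * Qfun a b s) +
        (Real.sin (Real.sqrt ρ * L) - Real.cos (Real.sqrt ρ * L) / Real.sqrt ρ) *
          (Real.sin (Real.sqrt ρ * s) * Qfun a b s)) := by
    apply intervalIntegral.integral_congr
    intro s _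
    dsimp only
    unfold ffA
    rw [show Real.sqrt ρ * (L - s) = Real.sqrt ρ * L - Real.sqrt ρ * s by ring,
      Real.sin_sub, Real.cos_sub]
    field_simp
    ring
  rw [h1, intervalIntegral.integral_add ((hcA.intervalIntegrable a b).const_mul _)
    ((hcB.intervalIntegrable a b).const_mul _),
    intervalIntegral.integral_const_mul, intervalIntegral.integral_const_mul]
  rfl

lemma phi_bd0 (ha : 0 ≤ a) : phiF a b ρ L 0 - phiDF a b ρ L 0 = 0 := by
  have hA := AAi_of_le (a := a) (b := b) (ρ := ρ) ha
  have hB := BBi_of_le (a := a) (b := b) (ρ := ρ) ha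
  unfold phiF phiDF ppf ppDf ffA ffDA
  rw [hA, hB]
  simp

lemma phi_bdL (hL : 0 < L) (hDD : DDc ρ L ≠ 0) (hbL : b ≤ L) :
    phiF a b ρ L L + phiDF a b ρ L L = 0 := by
  have hr : 0 < Real.sqrt ρ := Real.sqrt_pos.2 hρ
  have hsq : Real.sqrt ρ ^ 2 = ρ := Real.sq_sqrt hρ.le
  have hIb := Ib_eq hρ hab (L := L)
  have hCC : CCc a b ρ L * DDc ρ L = (1 + ρ) * ∫ s in a..b, ffA ρ (L - s) * Qfun a b s := by
    unfold CCc
    field_simp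
  have hfD : ffA ρ L + ffDA ρ L = DDc ρ L := by
    unfold ffA ffDA DDc
    field_simp
    linear_combination (-(Real.sin (Real.sqrt ρ * L))) * hsq
  have hAL := AAi_of_ge hab (a := a) (b := b) (ρ := ρ) hbL
  have hBL := BBi_of_ge hab (a := a) (b := b) (ρ := ρ) hbL
  have hpp : ppf a b ρ L + ppDf a b ρ L =
      -(1 + ρ) * ((Real.sin (Real.sqrt ρ * L) / Real.sqrt ρ + Real.cos (Real.sqrt ρ * L)) *
          AAi a b ρ b +
        (Real.sin (Real.sqrt ρ * L) - Real.cos (Real.sqrt ρ * L) / Real.sqrt ρ) *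
          BBi a b ρ b) := by
    unfold ppf ppDf
    rw [hAL, hBL]
    field_simp
    ring
  have : phiF a b ρ L L + phiDF a b ρ L L =
      CCc a b ρ L * (ffA ρ L + ffDA ρ L) + (ppf a b ρ L + ppDf a b ρ L) := by
    unfold phiF phiDF; ring
  rw [this, hfD, hpp, hCC, hIb]
  ring

end IntId


-- ===================== main analytic facts =====================

section Main

variable {a b ρ L : ℝ} (hρ : 0 < ρ) (hρs : ρ < rhoStar L) (hL : 0 < L) (hab : a < b)
  (hsub : Set.Icc a b ⊆ Set.Icc 0 L)

include hρ hρs hL hab hsub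

lemma ha0 : 0 ≤ a := (hsub ⟨le_refl a, hab.le⟩).1

lemma hbL : b ≤ L := (hsub ⟨hab.le, le_refl b⟩).2

lemma Ib_nonneg : 0 ≤ ∫ s in a..b, ffA ρ (L - s) * Qfun a b s := by
  have h0a := ha0 hρ hρs hL hab hsub
  have hbL' := hbL hρ hρs hL hab hsub
  apply intervalIntegral.integral_nonneg hab.le
  intro s hs
  exact mul_nonneg (ffA_nonneg hρ hρs hL (L - s) ⟨by linarith [hs.2], by linarith [hs.1]⟩)
    (Qfun_nonneg a b s)

lemma CC_nonneg : 0 ≤ CCc a b ρ L := by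
  have hD := DD_pos hρ hρs hL
  have hI := Ib_nonneg hρ hρs hL hab hsub
  unfold CCc
  positivity

lemma sin_term_nonneg {y s : ℝ} (hs : 0 ≤ s) (hsy : s ≤ y) (hyL : y ≤ L) :
    0 ≤ Real.sin (Real.sqrt ρ * (y - s)) / Real.sqrt ρ := by
  have hr : 0 < Real.sqrt ρ := Real.sqrt_pos.2 hρ
  have hπ := sqrtL_lt_pi hρ hρs hL
  apply div_nonneg _ hr.le
  apply Real.sin_nonneg_of_nonneg_of_le_pi
  · nlinarith
  · nlinarith

lemma ppf_nonpos : ∀ y ∈ Set.Icc (0:ℝ) L, ppf a b ρ y ≤ 0 := by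
  intro y hy
  rcases le_or_gt y a with hya | hay
  · unfold ppf
    rw [AAi_of_le hya, BBi_of_le hya]
    simp
  · rw [ppf_eq_integral hρ hab]
    have h0a := ha0 hρ hρs hL hab hsub
    have : 0 ≤ ∫ s in a..y, Real.sin (Real.sqrt ρ * (y - s)) / Real.sqrt ρ * Qfun a b s := by
      apply intervalIntegral.integral_nonneg hay.le
      intro s hs
      exact mul_nonneg (sin_term_nonneg hρ hρs hL hab hsub (by linarith [hs.1]) hs.2 hy.2)
        (Qfun_nonneg a b s)
    nlinarith

lemma int_ffQ_le {y : ℝ} (hy : a ≤ y) (hyL : y ≤ L) (hy0 : 0 ≤ y) :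
    (∫ s in a..y, ffA ρ (L - s) * Qfun a b s) ≤ ∫ s in a..b, ffA ρ (L - s) * Qfun a b s := by
  have hcf : Continuous fun s => ffA ρ (L - s) * Qfun a b s := by
    apply Continuous.mul _ (Qfun_continuous hab)
    unfold ffA
    fun_prop
  rcases le_total y b with hyb | hby
  · have hsplit := intervalIntegral.integral_add_adjacent_intervals (μ := MeasureTheory.volume)
      (hcf.intervalIntegrable a y) (hcf.intervalIntegrable y b)
    have hnn : 0 ≤ ∫ s in y..b, ffA ρ (L - s) * Qfun a b s := by
      apply intervalIntegral.integral_nonneg hyb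
      intro s hs
      exact mul_nonneg (ffA_nonneg hρ hρs hL (L - s)
        ⟨by linarith [hs.2, hbL hρ hρs hL hab hsub], by linarith [hs.1]⟩) (Qfun_nonneg a b s)
    linarith [hsplit]
  · have hsplit := intervalIntegral.integral_add_adjacent_intervals (μ := MeasureTheory.volume)
      (hcf.intervalIntegrable a b) (hcf.intervalIntegrable b y)
    have hz : (∫ s in b..y, ffA ρ (L - s) * Qfun a b s) = 0 := by
      have h : Set.EqOn (fun s => ffA ρ (L - s) * Qfun a b s) (fun _ => (0:ℝ))
          (Set.uIcc b y) := by
        intro s hs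
        rw [Set.uIcc_of_le hby] at hs
        simp [Qfun_of_ge hab hs.1]
      rw [intervalIntegral.integral_congr h]
      simp
    linarith [hsplit]

lemma phiF_nonneg : ∀ y ∈ Set.Icc (0:ℝ) L, 0 ≤ phiF a b ρ L y := by
  intro y hy
  have h0a := ha0 hρ hρs hL hab hsub
  have hCC := CC_nonneg hρ hρs hL hab hsub
  have hfy := ffA_nonneg hρ hρs hL y hy
  rcases le_or_gt y a with hya | hay
  · have : ppf a b ρ y = 0 := by
      unfold ppf
      rw [AAi_of_le hya, BBi_of_le hya]
      simp
    unfold phiF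
    rw [this]
    positivity
  · have hD := DD_pos hρ hρs hL
    have hc1 : Continuous fun s => Real.sin (Real.sqrt ρ * (y - s)) / Real.sqrt ρ * Qfun a b s := by
      apply Continuous.mul _ (Qfun_continuous hab)
      fun_prop
    have hc2 : Continuous fun s => ffA ρ y * ffA ρ (L - s) / DDc ρ L * Qfun a b s := by
      apply Continuous.mul _ (Qfun_continuous hab)
      unfold ffA
      fun_prop
    have hmono : (∫ s in a..y, Real.sin (Real.sqrt ρ * (y - s)) / Real.sqrt ρ * Qfun a b s) ≤
        ∫ s in a..y, ffA ρ y * ffA ρ (L - s) / DDc ρ L * Qfun a b s := by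
      apply intervalIntegral.integral_mono_on hay.le (hc1.intervalIntegrable a y)
        (hc2.intervalIntegrable a y)
      intro s hs
      exact mul_le_mul_of_nonneg_right
        (green_pt hρ hρs hL (by linarith [hs.1]) hs.2 hy.2) (Qfun_nonneg a b s)
    have hpull : (∫ s in a..y, ffA ρ y * ffA ρ (L - s) / DDc ρ L * Qfun a b s) =
        ffA ρ y / DDc ρ L * ∫ s in a..y, ffA ρ (L - s) * Qfun a b s := by
      rw [← intervalIntegral.integral_const_mul]
      apply intervalIntegral.integral_congr
      intro s _
      dsimp only
      ring
    have hle := int_ffQ_le hρ hρs hL hab hsub hay.le hy.2 hy.1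
    have key : (1 + ρ) * ∫ s in a..y, Real.sin (Real.sqrt ρ * (y - s)) / Real.sqrt ρ * Qfun a b s ≤
        CCc a b ρ L * ffA ρ y := by
      have h2 : (1 + ρ) * ∫ s in a..y, Real.sin (Real.sqrt ρ * (y - s)) / Real.sqrt ρ * Qfun a b s ≤
          (1 + ρ) * (ffA ρ y / DDc ρ L * ∫ s in a..y, ffA ρ (L - s) * Qfun a b s) := by
        rw [← hpull]
        apply mul_le_mul_of_nonneg_left hmono (by linarith)
      have h3 : (1 + ρ) * (ffA ρ y / DDc ρ L * ∫ s in a..y, ffA ρ (L - s) * Qfun a b s) ≤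
          (1 + ρ) * (ffA ρ y / DDc ρ L * ∫ s in a..b, ffA ρ (L - s) * Qfun a b s) := by
        apply mul_le_mul_of_nonneg_left _ (by linarith)
        apply mul_le_mul_of_nonneg_left hle (by positivity)
      have h4 : (1 + ρ) * (ffA ρ y / DDc ρ L * ∫ s in a..b, ffA ρ (L - s) * Qfun a b s) =
          CCc a b ρ L * ffA ρ y := by
        unfold CCc
        ring
      linarith
    rw [show phiF a b ρ L y = CCc a b ρ L * ffA ρ y + ppf a b ρ y from rfl,
      ppf_eq_integral hρ hab]
    linarith

lemma CC_le_base :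
    CCc a b ρ L ≤
      (b - a) * (1 + ρ) * (Real.sin (Real.sqrt ρ * L) / Real.sqrt ρ + (b + 1)) / DDc ρ L := by
  have hr : 0 < Real.sqrt ρ := Real.sqrt_pos.2 hρ
  have hD := DD_pos hρ hρs hL
  have h0a := ha0 hρ hρs hL hab hsub
  have hbL' := hbL hρ hρs hL hab hsub
  have hπ := sqrtL_lt_pi hρ hρs hL
  have hsinL : 0 ≤ Real.sin (Real.sqrt ρ * L) :=
    Real.sin_nonneg_of_nonneg_of_le_pi (by positivity) (by linarith)
  have hptwise : ∀ s ∈ Set.Icc a b, ffA ρ (L - s) * Qfun a b s ≤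
      (Real.sin (Real.sqrt ρ * L) / Real.sqrt ρ + (b + 1)) * Qfun a b s := by
    intro s hs
    apply mul_le_mul_of_nonneg_right _ (Qfun_nonneg a b s)
    have hs0 : 0 ≤ s := le_trans h0a hs.1
    have hsL : s ≤ L := le_trans hs.2 hbL'
    have hsin_rs : 0 ≤ Real.sin (Real.sqrt ρ * s) :=
      Real.sin_nonneg_of_nonneg_of_le_pi (by positivity) (by nlinarith)
    have hsin_le : Real.sin (Real.sqrt ρ * s) ≤ Real.sqrt ρ * s := Real.sin_le (by positivity)
    have hkey : Real.sin (Real.sqrt ρ * (L - s)) ≤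
        Real.sin (Real.sqrt ρ * L) + Real.sqrt ρ * s := by
      rw [show Real.sqrt ρ * (L - s) = Real.sqrt ρ * L - Real.sqrt ρ * s by ring, Real.sin_sub]
      nlinarith [Real.cos_le_one (Real.sqrt ρ * s), Real.neg_one_le_cos (Real.sqrt ρ * L),
        Real.sin_le_one (Real.sqrt ρ * L), Real.cos_le_one (Real.sqrt ρ * L)]
    have h1 : Real.sin (Real.sqrt ρ * (L - s)) / Real.sqrt ρ ≤
        Real.sin (Real.sqrt ρ * L) / Real.sqrt ρ + s := by
      rw [div_le_iff₀ hr]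
      have : (Real.sin (Real.sqrt ρ * L) / Real.sqrt ρ + s) * Real.sqrt ρ =
          Real.sin (Real.sqrt ρ * L) + Real.sqrt ρ * s := by
        field_simp
      linarith [this ▸ hkey]
    have h2 : Real.cos (Real.sqrt ρ * (L - s)) ≤ 1 := Real.cos_le_one _
    unfold ffA
    nlinarith [hs.2]
  have hcf : Continuous fun s => ffA ρ (L - s) * Qfun a b s := by
    apply Continuous.mul _ (Qfun_continuous hab)
    unfold ffA
    fun_prop
  have hint : (∫ s in a..b, ffA ρ (L - s) * Qfun a b s) ≤
      (Real.sin (Real.sqrt ρ * L) / Real.sqrt ρ + (b + 1)) * (b - a) := by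
    calc (∫ s in a..b, ffA ρ (L - s) * Qfun a b s) ≤
        ∫ s in a..b, (Real.sin (Real.sqrt ρ * L) / Real.sqrt ρ + (b + 1)) * Qfun a b s := by
          apply intervalIntegral.integral_mono_on hab.le (hcf.intervalIntegrable a b)
            ((continuous_const.mul (Qfun_continuous hab)).intervalIntegrable a b) hptwise
      _ = (Real.sin (Real.sqrt ρ * L) / Real.sqrt ρ + (b + 1)) * (b - a) := by
          rw [intervalIntegral.integral_const_mul, Qfun_integral hab]
  have : CCc a b ρ L ≤ (1 + ρ) / DDc ρ L *
      ((Real.sin (Real.sqrt ρ * L) / Real.sqrt ρ + (b + 1)) * (b - a)) := by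
    unfold CCc
    apply mul_le_mul_of_nonneg_left hint (by positivity)
  calc CCc a b ρ L ≤ (1 + ρ) / DDc ρ L *
      ((Real.sin (Real.sqrt ρ * L) / Real.sqrt ρ + (b + 1)) * (b - a)) := this
    _ = (b - a) * (1 + ρ) * (Real.sin (Real.sqrt ρ * L) / Real.sqrt ρ + (b + 1)) / DDc ρ L := by
        ring

lemma green_id : ∀ y ∈ Set.Icc (0:ℝ) L,
    (1 + ρ) * ∫ t in (0:ℝ)..L, (Qfun a b t + phiF a b ρ L t) * (1 / 2 * Real.exp (-|y - t|)) =
      phiF a b ρ L y := by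
  intro y hy
  have hρ1 : (1:ℝ) + ρ ≠ 0 := by linarith
  have hQc := Qfun_continuous hab
  have hphic := continuous_phiF hρ hab (L := L)
  have hint : Continuous fun t => (Qfun a b t + phiF a b ρ L t) *
      (1 / 2 * Real.exp (-|y - t|)) := by
    apply Continuous.mul (hQc.add hphic)
    fun_prop
  have hce : Continuous fun t => Real.exp t * (Qfun a b t + phiF a b ρ L t) := by
    fun_prop (disch := exact hQc.add hphic)
  have hce' : Continuous fun t => Real.exp (-t) * (Qfun a b t + phiF a b ρ L t) :=
    (by fun_prop : Continuous fun t : ℝ => Real.exp (-t)).mul (hQc.add hphic)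
  -- FTC on [0, y]
  have hftcA : ∫ t in (0:ℝ)..y, Real.exp t * (Qfun a b t + phiF a b ρ L t) =
      Real.exp y * (phiF a b ρ L y - phiDF a b ρ L y) / (1 + ρ) -
        Real.exp 0 * (phiF a b ρ L 0 - phiDF a b ρ L 0) / (1 + ρ) := by
    apply intervalIntegral.integral_eq_sub_of_hasDerivAt
    · intro t _
      have h := ((Real.hasDerivAt_exp t).mul
        ((hasDerivAt_phiF hρ hab (L := L) t).sub (hasDerivAt_phiDF hρ hab (L := L) t))).div_const (1 + ρ)
      refine h.congr_deriv ?_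
      symm
      simp only [Pi.mul_apply, Pi.sub_apply, Pi.add_apply]
      field_simp
      ring
    · exact hce.intervalIntegrable 0 y
  -- FTC on [y, L]
  have hftcB : ∫ t in y..L, Real.exp (-t) * (Qfun a b t + phiF a b ρ L t) =
      (-(Real.exp (-L) * (phiF a b ρ L L + phiDF a b ρ L L)) / (1 + ρ)) -
        (-(Real.exp (-y) * (phiF a b ρ L y + phiDF a b ρ L y)) / (1 + ρ)) := by
    apply intervalIntegral.integral_eq_sub_of_hasDerivAt
      (f := fun t => -(Real.exp (-t) * (phiF a b ρ L t + phiDF a b ρ L t)) / (1 + ρ))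
    · intro t _
      have hexp : HasDerivAt (fun t : ℝ => Real.exp (-t)) (-Real.exp (-t)) t := by
        exact ((Real.hasDerivAt_exp (-t)).comp t ((hasDerivAt_id t).neg)).congr_deriv (by simp)
      have h := ((hexp.mul
        ((hasDerivAt_phiF hρ hab (L := L) t).add (hasDerivAt_phiDF hρ hab (L := L) t))).neg).div_const (1 + ρ)
      refine h.congr_deriv ?_
      symm
      simp only [Pi.mul_apply, Pi.sub_apply, Pi.add_apply]
      field_simp
      ring
    · exact hce'.intervalIntegrable y L
  have hbd0 : phiF a b ρ L 0 - phiDF a b ρ L 0 = 0 :=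
    phi_bd0 hρ hab (ha0 hρ hρs hL hab hsub)
  have hbdL : phiF a b ρ L L + phiDF a b ρ L L = 0 :=
    phi_bdL hρ hab hL (DD_pos hρ hρs hL).ne' (hbL hρ hρs hL hab hsub)
  have hsplit := intervalIntegral.integral_add_adjacent_intervals (μ := MeasureTheory.volume)
    (hint.intervalIntegrable 0 y) (hint.intervalIntegrable y L)
  have hcg1 : (∫ t in (0:ℝ)..y, (Qfun a b t + phiF a b ρ L t) * (1 / 2 * Real.exp (-|y - t|))) =
      Real.exp (-y) / 2 * ∫ t in (0:ℝ)..y, Real.exp t * (Qfun a b t + phiF a b ρ L t) := by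
    rw [← intervalIntegral.integral_const_mul]
    apply intervalIntegral.integral_congr
    intro t ht
    rw [Set.uIcc_of_le hy.1] at ht
    dsimp only
    rw [abs_of_nonneg (by linarith [ht.2] : (0:ℝ) ≤ y - t),
      show -(y - t) = t + -y by ring, Real.exp_add]
    ring
  have hcg2 : (∫ t in y..L, (Qfun a b t + phiF a b ρ L t) * (1 / 2 * Real.exp (-|y - t|))) =
      Real.exp y / 2 * ∫ t in y..L, Real.exp (-t) * (Qfun a b t + phiF a b ρ L t) := by
    rw [← intervalIntegral.integral_const_mul]
    apply intervalIntegral.integral_congr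
    intro t ht
    rw [Set.uIcc_of_le hy.2] at ht
    dsimp only
    rw [abs_of_nonpos (by linarith [ht.1] : y - t ≤ 0),
      show -(-(y - t)) = -t + y by ring, Real.exp_add]
    ring
  rw [← hsplit, hcg1, hcg2, hftcA, hftcB, hbd0, hbdL]
  have hey : Real.exp (-y) * Real.exp y = 1 := by
    rw [← Real.exp_add]; simp
  field_simp
  linear_combination (2 * phiF a b ρ L y) * hey

lemma GG_nonneg : ∀ y, 0 ≤ GGf a b ρ L y := by
  intro y
  unfold GGf
  split
  · rename_i hy
    have := phiF_nonneg hρ hρs hL hab hsub y hy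
    have := Qfun_nonneg a b y
    linarith
  · exact le_rfl

lemma GG_bound : ∀ y, GGf a b ρ L y ≤ 2 + CCc a b ρ L * (L + 1) := by
  intro y
  have hCC := CC_nonneg hρ hρs hL hab hsub
  unfold GGf
  split
  · rename_i hy
    have h1 := Qfun_le_two a b y
    have h2 := ppf_nonpos hρ hρs hL hab hsub y hy
    have h3 : ffA ρ y ≤ y + 1 := ffA_le_add_one hρ hy.1
    have h4 : CCc a b ρ L * ffA ρ y ≤ CCc a b ρ L * (L + 1) := by
      apply mul_le_mul_of_nonneg_left _ hCC
      linarith [hy.2]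
    unfold phiF
    linarith
  · nlinarith [hL]

lemma GG_measurable : Measurable (GGf a b ρ L) := by
  unfold GGf
  exact Measurable.ite measurableSet_Icc
    ((Qfun_measurable a b).add (continuous_phiF hρ hab).measurable) measurable_const

lemma GG_zero : ∀ y, y ∉ Set.Icc (0:ℝ) L → GGf a b ρ L y = 0 := by
  intro y hy
  unfold GGf
  rw [if_neg hy]

lemma GG_super : ∀ y ∈ Set.Icc (0:ℝ) L,
    Qfun a b y + (1 + ρ) * ∫ s, GGf a b ρ L (y + s) * (1 / 2 * Real.exp (-|s|)) ≤
      GGf a b ρ L y := by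
  intro y hy
  have h2 : (∫ s, GGf a b ρ L (y + s) * (1 / 2 * Real.exp (-|s|))) =
      ∫ t, GGf a b ρ L t * (1 / 2 * Real.exp (-|t - y|)) := by
    have h0 := MeasureTheory.integral_add_right_eq_self (μ := MeasureTheory.volume)
      (fun t => GGf a b ρ L t * (1 / 2 * Real.exp (-|t - y|))) y
    rw [← h0]
    congr 1
    funext s
    rw [show s + y - y = s by ring, add_comm s y]
  have h3 : (fun t => GGf a b ρ L t * (1 / 2 * Real.exp (-|t - y|))) =
      Set.indicator (Set.Icc 0 L)
        (fun t => (Qfun a b t + phiF a b ρ L t) * (1 / 2 * Real.exp (-|t - y|))) := by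
    funext t
    unfold GGf
    by_cases ht : t ∈ Set.Icc (0:ℝ) L
    · rw [if_pos ht, Set.indicator_of_mem ht]
    · rw [if_neg ht, Set.indicator_of_notMem ht, zero_mul]
  have h4 : (∫ t, GGf a b ρ L t * (1 / 2 * Real.exp (-|t - y|))) =
      ∫ t in (0:ℝ)..L, (Qfun a b t + phiF a b ρ L t) * (1 / 2 * Real.exp (-|t - y|)) := by
    rw [h3, MeasureTheory.integral_indicator measurableSet_Icc,
      MeasureTheory.integral_Icc_eq_integral_Ioc, ← intervalIntegral.integral_of_le hL.le]
  have h5 : ∀ t : ℝ, |t - y| = |y - t| := fun t => abs_sub_comm t y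
  have h6 : (∫ t in (0:ℝ)..L, (Qfun a b t + phiF a b ρ L t) * (1 / 2 * Real.exp (-|t - y|))) =
      ∫ t in (0:ℝ)..L, (Qfun a b t + phiF a b ρ L t) * (1 / 2 * Real.exp (-|y - t|)) := by
    apply intervalIntegral.integral_congr
    intro t _
    dsimp only
    rw [h5 t]
  rw [h2, h4, h6, green_id hρ hρs hL hab hsub y hy]
  unfold GGf
  rw [if_pos hy]

end Main

-- ===================== lap integral conversion =====================

lemma lint_lap (L : ℝ) (G : ℝ → ℝ) (hGmeas : Measurable G) (hGnn : ∀ y, 0 ≤ G y)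
    (hGz : ∀ y, y ∉ Set.Icc (0:ℝ) L → G y = 0) (Cb : ℝ) (hCb : ∀ y, G y ≤ Cb) (y : ℝ) :
    ∫⁻ s, ENNReal.ofReal (G (y + s)) ∂lapMeasure =
      ENNReal.ofReal (∫ s, G (y + s) * (1 / 2 * Real.exp (-|s|))) := by
  have hCb0 : 0 ≤ Cb := le_trans (hGnn 0) (hCb 0)
  have hdens : Measurable fun t : ℝ => ENNReal.ofReal ((1 / 2) * Real.exp (-|t|)) := by
    apply Measurable.ennreal_ofReal
    fun_prop
  have hg : Measurable fun s => ENNReal.ofReal (G (y + s)) := by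
    apply Measurable.ennreal_ofReal
    exact hGmeas.comp (measurable_const.add measurable_id)
  have hfm : Measurable fun s => G (y + s) * (1 / 2 * Real.exp (-|s|)) := by
    apply Measurable.mul (hGmeas.comp (measurable_const.add measurable_id))
    fun_prop
  have hfint : MeasureTheory.Integrable (fun s => G (y + s) * (1 / 2 * Real.exp (-|s|))) := by
    have hg0int : MeasureTheory.Integrable
        ((Set.Icc (-y) (L - y)).indicator (fun _ => Cb * (1 / 2))) := by
      rw [MeasureTheory.integrable_indicator_iff measurableSet_Icc]
      exact MeasureTheory.integrableOn_const measure_Icc_lt_top.ne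
    apply MeasureTheory.Integrable.mono' hg0int hfm.aestronglyMeasurable
    apply MeasureTheory.ae_of_all
    intro s
    by_cases hs : y + s ∈ Set.Icc (0:ℝ) L
    · have hmem : s ∈ Set.Icc (-y) (L - y) := ⟨by linarith [hs.1], by linarith [hs.2]⟩
      rw [Set.indicator_of_mem hmem, Real.norm_eq_abs,
        abs_of_nonneg (mul_nonneg (hGnn _) (by positivity))]
      have he : Real.exp (-|s|) ≤ 1 := by
        rw [Real.exp_le_one_iff]
        simp [abs_nonneg]
      nlinarith [hGnn (y + s), hCb (y + s), Real.exp_pos (-|s|),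
        mul_nonneg (sub_nonneg.2 (hCb (y + s))) (Real.exp_pos (-|s|)).le,
        mul_nonneg hCb0 (sub_nonneg.2 he)]
    · rw [hGz _ hs, zero_mul, norm_zero]
      apply Set.indicator_nonneg
      intro _ _
      positivity
  have hpt : ∀ s : ℝ, ENNReal.ofReal ((1 / 2) * Real.exp (-|s|)) *
      ENNReal.ofReal (G (y + s)) = ENNReal.ofReal (G (y + s) * (1 / 2 * Real.exp (-|s|))) := by
    intro s
    rw [← ENNReal.ofReal_mul (by positivity)]
    congr 1
    ring
  rw [show lapMeasure = MeasureTheory.volume.withDensity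
      (fun t => ENNReal.ofReal ((1 / 2) * Real.exp (-|t|))) from rfl]
  rw [MeasureTheory.lintegral_withDensity_eq_lintegral_mul _ hdens hg]
  have hcg : ∫⁻ s, ((fun t => ENNReal.ofReal ((1 / 2) * Real.exp (-|t|))) *
      fun s => ENNReal.ofReal (G (y + s))) s ∂MeasureTheory.volume =
      ∫⁻ s, ENNReal.ofReal (G (y + s) * (1 / 2 * Real.exp (-|s|))) ∂MeasureTheory.volume := by
    apply MeasureTheory.lintegral_congr
    intro s
    simp only [Pi.mul_apply]
    exact hpt s
  rw [hcg, ← MeasureTheory.ofReal_integral_eq_lintegral_ofReal hfint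
    (MeasureTheory.ae_of_all _ fun s => mul_nonneg (hGnn _) (by positivity))]

-- ===================== probability part =====================

def termF (a b ρ L : ℝ) (X : ℕ → Ω → ℝ) (y : ℝ) (k : ℕ) (ω : Ω) : ℝ≥0∞ :=
  if ∀ i ≤ k, walk y X i ω ∈ Set.Icc 0 L
    then ENNReal.ofReal ((1 + ρ) ^ k * Qfun a b (walk y X k ω)) else 0

def vpad (n : ℕ) (v : Fin n → ℝ) (j : ℕ) : ℝ := if h : j < n then v ⟨j, h⟩ else 0

def FF (a b ρ L y : ℝ) (n : ℕ) (s : ℝ) (v : Fin n → ℝ) : ℝ≥0∞ :=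
  ∑ k ∈ Finset.range n, termF a b ρ L (fun j (_ : Unit) => vpad n v j) (y + s) k ()

lemma walk_zero (x : ℝ) (X : ℕ → Ω → ℝ) (ω : Ω) : walk x X 0 ω = x := by
  simp [walk]

lemma walk_succ (x : ℝ) (X : ℕ → Ω → ℝ) (k : ℕ) (ω : Ω) :
    walk x X (k + 1) ω = walk (x + X 0 ω) (fun i => X (i + 1)) k ω := by
  unfold walk
  rw [Finset.sum_range_succ']
  ring

lemma shift_isLaplaceWalk {μ : Measure Ω} {X : ℕ → Ω → ℝ} (h : IsLaplaceWalk μ X) :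
    IsLaplaceWalk μ (fun i => X (i + 1)) := by
  constructor
  · exact h.prob
  · exact fun i => h.meas (i + 1)
  · classical
    have hind := (ProbabilityTheory.iIndepFun_iff _ _ _).1 h.indep
    apply (ProbabilityTheory.iIndepFun_iff _ _ _).2
    intro s f' H
    set e : ℕ ↪ ℕ := ⟨fun i => i + 1, add_left_injective 1⟩ with he
    set g : ℕ → Set Ω := fun j => if 1 ≤ j then f' (j - 1) else Set.univ with hg
    have hmeas : ∀ j ∈ s.map e, MeasurableSet[MeasurableSpace.comap (X j) inferInstance] (g j) := by
      intro j hj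
      rw [Finset.mem_map] at hj
      obtain ⟨i, hi, rfl⟩ := hj
      have h1 : g (e i) = f' i := by
        simp only [hg, he, Function.Embedding.coeFn_mk]
        rw [if_pos (by omega), Nat.add_sub_cancel]
      rw [h1]
      exact H i hi
    have key := hind (s.map e) hmeas
    have h1 : (⋂ j ∈ s.map e, g j) = ⋂ i ∈ s, f' i := by
      ext ω
      simp only [Set.mem_iInter, Finset.mem_map, he, Function.Embedding.coeFn_mk]
      constructor
      · intro hω i hi
        have := hω (i + 1) ⟨i, hi, rfl⟩
        simpa [hg] using this
      · rintro hω j ⟨i, hi, rfl⟩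
        simpa [hg] using hω i hi
    have h2 : (∏ j ∈ s.map e, μ (g j)) = ∏ i ∈ s, μ (f' i) := by
      rw [Finset.prod_map]
      apply Finset.prod_congr rfl
      intro i _
      congr 1
    rw [h1, h2] at key
    exact key
  · exact fun i => h.dist (i + 1)

lemma measurable_walk {X : ℕ → Ω → ℝ} (hX : ∀ i, Measurable (X i)) {g : Ω → ℝ}
    (hg : Measurable g) (i : ℕ) : Measurable (fun ω => walk (g ω) X i ω) := by
  unfold walk
  exact hg.add (Finset.measurable_sum _ fun j _ => hX j)

lemma measurable_termF {a b ρ L : ℝ} {X : ℕ → Ω → ℝ} (hX : ∀ i, Measurable (X i))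
    {g : Ω → ℝ} (hg : Measurable g) (k : ℕ) :
    Measurable (fun ω => termF a b ρ L X (g ω) k ω) := by
  unfold termF
  apply Measurable.ite
  · have : {ω | ∀ i ≤ k, walk (g ω) X i ω ∈ Set.Icc (0:ℝ) L} =
        ⋂ i, ⋂ (_ : i ≤ k), (fun ω => walk (g ω) X i ω) ⁻¹' (Set.Icc 0 L) := by
      ext ω; simp
    rw [show {a_1 | ∀ i ≤ k, walk (g a_1) X i a_1 ∈ Set.Icc 0 L} =
      ⋂ i, ⋂ (_ : i ≤ k), (fun ω => walk (g ω) X i ω) ⁻¹' (Set.Icc (0:ℝ) L) from this]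
    exact MeasurableSet.iInter fun i => MeasurableSet.iInter fun _ =>
      (measurable_walk hX hg i) measurableSet_Icc
  · apply Measurable.ennreal_ofReal
    exact measurable_const.mul ((Qfun_measurable a b).comp (measurable_walk hX hg k))
  · exact measurable_const

lemma measurable_FF (a b ρ L y : ℝ) (n : ℕ) :
    Measurable (Function.uncurry (FF a b ρ L y n)) := by
  unfold FF Function.uncurry
  apply Finset.measurable_sum
  intro k _
  have hvp : ∀ j, Measurable fun p : ℝ × (Fin n → ℝ) => vpad n p.2 j := by
    intro j
    unfold vpad
    by_cases hj : j < n
    · simp only [dif_pos hj]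
      exact (measurable_pi_apply _).comp measurable_snd
    · simp only [dif_neg hj]
      exact measurable_const
  have hwalk : ∀ i, Measurable fun p : ℝ × (Fin n → ℝ) =>
      walk (y + p.1) (fun j (_ : Unit) => vpad n p.2 j) i () := by
    intro i
    unfold walk
    exact (measurable_const.add measurable_fst).add
      (Finset.measurable_sum _ fun j _ => hvp j)
  unfold termF
  apply Measurable.ite
  · have heq : {p : ℝ × (Fin n → ℝ) | ∀ i ≤ k,
        walk (y + p.1) (fun j (_ : Unit) => vpad n p.2 j) i () ∈ Set.Icc (0:ℝ) L} =
        ⋂ i, ⋂ (_ : i ≤ k), (fun p : ℝ × (Fin n → ℝ) =>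
          walk (y + p.1) (fun j (_ : Unit) => vpad n p.2 j) i ()) ⁻¹' (Set.Icc 0 L) := by
      ext p; simp
    rw [heq]
    exact MeasurableSet.iInter fun i => MeasurableSet.iInter fun _ =>
      (hwalk i) measurableSet_Icc
  · apply Measurable.ennreal_ofReal
    exact measurable_const.mul ((Qfun_measurable a b).comp (hwalk k))
  · exact measurable_const

lemma lint_indep {μ : Measure Ω} {X : ℕ → Ω → ℝ} (h : IsLaplaceWalk μ X) (n : ℕ)
    (F : ℝ → (Fin n → ℝ) → ℝ≥0∞) (hF : Measurable (Function.uncurry F)) :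
    ∫⁻ ω, F (X 0 ω) (fun i => X (i + 1) ω) ∂μ =
      ∫⁻ s, ∫⁻ ω, F s (fun i => X (i + 1) ω) ∂μ ∂lapMeasure := by
  haveI := h.prob
  classical
  set V : Ω → (Fin n → ℝ) := fun ω i => X ((i : ℕ) + 1) ω with hV
  have hVm : Measurable V := measurable_pi_lambda _ fun i => h.meas _
  have hX0 : Measurable (X 0) := h.meas 0
  set T : Finset ℕ := (Finset.range n).map ⟨fun i => i + 1, add_left_injective 1⟩ with hT
  have hd : Disjoint ({0} : Finset ℕ) T := by
    rw [Finset.disjoint_left]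
    intro j hj hmem
    rw [Finset.mem_singleton] at hj
    subst hj
    rw [hT, Finset.mem_map] at hmem
    obtain ⟨i, _, hcontra⟩ := hmem
    simp at hcontra
  have h1 := h.indep.indepFun_finset {0} T hd h.meas
  have hmem0 : (0:ℕ) ∈ ({0} : Finset ℕ) := Finset.mem_singleton_self 0
  have e2mem : ∀ i : Fin n, ((i : ℕ) + 1) ∈ T := fun i => by
    rw [hT, Finset.mem_map]
    exact ⟨i, Finset.mem_range.2 i.isLt, rfl⟩
  have h2 : IndepFun (X 0) V μ := by
    have := h1.comp (_mγ := inferInstance) (_mγ' := inferInstance) (φ := fun v : (↥({0} : Finset ℕ) → ℝ) => v ⟨0, hmem0⟩)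
      (ψ := fun v : (↥T → ℝ) => fun i : Fin n => v ⟨(i : ℕ) + 1, e2mem i⟩)
      (by fun_prop) (by fun_prop)
    exact this
  have h3 : μ.map (fun ω => (X 0 ω, V ω)) = (μ.map (X 0)).prod (μ.map V) :=
    (ProbabilityTheory.indepFun_iff_map_prod_eq_prod_map_map hX0.aemeasurable
      hVm.aemeasurable).1 h2
  haveI : IsProbabilityMeasure (μ.map V) :=
    MeasureTheory.Measure.isProbabilityMeasure_map hVm.aemeasurable
  calc ∫⁻ ω, F (X 0 ω) (V ω) ∂μ
      = ∫⁻ p, Function.uncurry F p ∂(μ.map (fun ω => (X 0 ω, V ω))) :=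
        (MeasureTheory.lintegral_map hF (hX0.prodMk hVm)).symm
    _ = ∫⁻ p, Function.uncurry F p ∂((μ.map (X 0)).prod (μ.map V)) := by rw [h3]
    _ = ∫⁻ s, ∫⁻ v, F s v ∂(μ.map V) ∂(μ.map (X 0)) :=
        MeasureTheory.lintegral_prod _ hF.aemeasurable
    _ = ∫⁻ s, ∫⁻ ω, F s (V ω) ∂μ ∂(μ.map (X 0)) := by
        apply MeasureTheory.lintegral_congr
        intro s
        exact MeasureTheory.lintegral_map (hF.comp measurable_prodMk_left) hVm
    _ = ∫⁻ s, ∫⁻ ω, F s (V ω) ∂μ ∂lapMeasure := by rw [h.dist 0]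

lemma FF_eq {a b ρ L : ℝ} (X : ℕ → Ω → ℝ) (y : ℝ) (n : ℕ) (s : ℝ) (ω : Ω) :
    FF a b ρ L y n s (fun i : Fin n => X ((i : ℕ) + 1) ω) =
      ∑ k ∈ Finset.range n, termF a b ρ L (fun i => X (i + 1)) (y + s) k ω := by
  unfold FF
  apply Finset.sum_congr rfl
  intro k hk
  rw [Finset.mem_range] at hk
  have hw : ∀ i, i ≤ k → walk (y + s)
      (fun j (_ : Unit) => vpad n (fun i : Fin n => X ((i : ℕ) + 1) ω) j) i () =
      walk (y + s) (fun i => X (i + 1)) i ω := by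
    intro i hi
    unfold walk
    congr 1
    apply Finset.sum_congr rfl
    intro j hj
    rw [Finset.mem_range] at hj
    dsimp only
    unfold vpad
    rw [dif_pos (by omega : j < n)]
  unfold termF
  have hcond : (∀ i ≤ k, walk (y + s)
      (fun j (_ : Unit) => vpad n (fun i : Fin n => X ((i : ℕ) + 1) ω) j) i () ∈
        Set.Icc (0:ℝ) L) ↔
      (∀ i ≤ k, walk (y + s) (fun i => X (i + 1)) i ω ∈ Set.Icc (0:ℝ) L) := by
    apply forall_congr'
    intro i
    constructor
    · intro hc hi
      rw [← hw i hi]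
      exact hc hi
    · intro hc hi
      rw [hw i hi]
      exact hc hi
  rw [if_congr hcond (by rw [hw k le_rfl]) rfl]

lemma main_ind (a b ρ L : ℝ) (hρ0 : 0 ≤ ρ) (G : ℝ → ℝ) (hGmeas : Measurable G)
    (hGnn : ∀ y, 0 ≤ G y) (hGz : ∀ y, y ∉ Set.Icc (0:ℝ) L → G y = 0)
    (hlint : ∀ y, ∫⁻ s, ENNReal.ofReal (G (y + s)) ∂lapMeasure =
      ENNReal.ofReal (∫ s, G (y + s) * (1 / 2 * Real.exp (-|s|))))
    (hsuper : ∀ y ∈ Set.Icc (0:ℝ) L,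
      Qfun a b y + (1 + ρ) * ∫ s, G (y + s) * (1 / 2 * Real.exp (-|s|)) ≤ G y) :
    ∀ n (μ : Measure Ω) (X : ℕ → Ω → ℝ), IsLaplaceWalk μ X → ∀ y : ℝ,
      ∫⁻ ω, ∑ k ∈ Finset.range n, termF a b ρ L X y k ω ∂μ ≤ ENNReal.ofReal (G y) := by
  intro n
  induction n with
  | zero => intro μ X h y; simp
  | succ n ih =>
    intro μ X h y
    haveI := h.prob
    have hX' : IsLaplaceWalk μ (fun i => X (i + 1)) := shift_isLaplaceWalk h
    by_cases hy : y ∈ Set.Icc (0:ℝ) L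
    · -- main case
      have hterm0 : ∀ ω : Ω, termF a b ρ L X y 0 ω = ENNReal.ofReal (Qfun a b y) := by
        intro ω
        unfold termF
        rw [if_pos]
        · rw [walk_zero, pow_zero, one_mul]
        · intro i hi
          have : i = 0 := Nat.le_zero.1 hi
          subst this
          rw [walk_zero]
          exact hy
      have hsucc : ∀ (ω : Ω) (k : ℕ), termF a b ρ L X y (k + 1) ω =
          ENNReal.ofReal (1 + ρ) * termF a b ρ L (fun i => X (i + 1)) (y + X 0 ω) k ω := by
        intro ω k
        unfold termF
        have hcond : (∀ i ≤ k + 1, walk y X i ω ∈ Set.Icc (0:ℝ) L) ↔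
            (∀ i ≤ k, walk (y + X 0 ω) (fun i => X (i + 1)) i ω ∈ Set.Icc (0:ℝ) L) := by
          constructor
          · intro hc i hi
            rw [← walk_succ]
            exact hc (i + 1) (by omega)
          · intro hc i hi
            cases i with
            | zero => rw [walk_zero]; exact hy
            | succ j => rw [walk_succ]; exact hc j (by omega)
        by_cases hc : ∀ i ≤ k, walk (y + X 0 ω) (fun i => X (i + 1)) i ω ∈ Set.Icc (0:ℝ) L
        · rw [if_pos (hcond.2 hc), if_pos hc, walk_succ,
            ← ENNReal.ofReal_mul (by linarith : (0:ℝ) ≤ 1 + ρ)]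
          congr 1
          ring
        · rw [if_neg (fun hcon => hc (hcond.1 hcon)), if_neg hc, mul_zero]
      have hsum : ∀ ω : Ω, ∑ k ∈ Finset.range (n + 1), termF a b ρ L X y k ω =
          ENNReal.ofReal (Qfun a b y) + ENNReal.ofReal (1 + ρ) *
            ∑ k ∈ Finset.range n, termF a b ρ L (fun i => X (i + 1)) (y + X 0 ω) k ω := by
        intro ω
        rw [Finset.sum_range_succ']
        simp only [hsucc, hterm0]
        rw [← Finset.mul_sum]
        ring
      rw [MeasureTheory.lintegral_congr hsum]
      have hmeas2 : Measurable fun ω =>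
          ∑ k ∈ Finset.range n, termF a b ρ L (fun i => X (i + 1)) (y + X 0 ω) k ω :=
        Finset.measurable_sum _ fun k _ =>
          measurable_termF (fun i => h.meas (i + 1)) (measurable_const.add (h.meas 0)) k
      rw [MeasureTheory.lintegral_add_left measurable_const, MeasureTheory.lintegral_const,
        measure_univ, mul_one, MeasureTheory.lintegral_const_mul _ hmeas2]
      have hkey : ∫⁻ ω, ∑ k ∈ Finset.range n,
          termF a b ρ L (fun i => X (i + 1)) (y + X 0 ω) k ω ∂μ ≤
          ENNReal.ofReal (∫ s, G (y + s) * (1 / 2 * Real.exp (-|s|))) := by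
        have he : ∀ ω : Ω, ∑ k ∈ Finset.range n,
            termF a b ρ L (fun i => X (i + 1)) (y + X 0 ω) k ω =
            FF a b ρ L y n (X 0 ω) (fun i : Fin n => X ((i : ℕ) + 1) ω) :=
          fun ω => (FF_eq X y n (X 0 ω) ω).symm
        rw [MeasureTheory.lintegral_congr he,
          lint_indep h n (FF a b ρ L y n) (measurable_FF a b ρ L y n)]
        calc ∫⁻ s, ∫⁻ ω, FF a b ρ L y n s (fun i : Fin n => X ((i : ℕ) + 1) ω) ∂μ ∂lapMeasure
            ≤ ∫⁻ s, ENNReal.ofReal (G (y + s)) ∂lapMeasure := by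
              apply MeasureTheory.lintegral_mono
              intro s
              have h2 := ih μ (fun i => X (i + 1)) hX' (y + s)
              calc ∫⁻ ω, FF a b ρ L y n s (fun i : Fin n => X ((i : ℕ) + 1) ω) ∂μ
                  = ∫⁻ ω, ∑ k ∈ Finset.range n,
                      termF a b ρ L (fun i => X (i + 1)) (y + s) k ω ∂μ :=
                    MeasureTheory.lintegral_congr fun ω => FF_eq X y n s ω
                _ ≤ ENNReal.ofReal (G (y + s)) := h2
          _ = ENNReal.ofReal (∫ s, G (y + s) * (1 / 2 * Real.exp (-|s|))) := hlint y
      have hQnn : 0 ≤ Qfun a b y := Qfun_nonneg a b y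
      have hInn : 0 ≤ ∫ s, G (y + s) * (1 / 2 * Real.exp (-|s|)) :=
        MeasureTheory.integral_nonneg fun s => mul_nonneg (hGnn _) (by positivity)
      calc ENNReal.ofReal (Qfun a b y) + ENNReal.ofReal (1 + ρ) *
          ∫⁻ ω, ∑ k ∈ Finset.range n,
            termF a b ρ L (fun i => X (i + 1)) (y + X 0 ω) k ω ∂μ
          ≤ ENNReal.ofReal (Qfun a b y) + ENNReal.ofReal (1 + ρ) *
            ENNReal.ofReal (∫ s, G (y + s) * (1 / 2 * Real.exp (-|s|))) :=
            add_le_add_right (mul_le_mul_right hkey _) _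
        _ = ENNReal.ofReal (Qfun a b y +
            (1 + ρ) * ∫ s, G (y + s) * (1 / 2 * Real.exp (-|s|))) := by
            rw [← ENNReal.ofReal_mul (by linarith : (0:ℝ) ≤ 1 + ρ),
              ← ENNReal.ofReal_add hQnn (mul_nonneg (by linarith) hInn)]
        _ ≤ ENNReal.ofReal (G y) := ENNReal.ofReal_le_ofReal (hsuper y hy)
    · -- y outside [0, L]
      have hz : ∀ ω : Ω, ∑ k ∈ Finset.range (n + 1), termF a b ρ L X y k ω = 0 := by
        intro ω
        apply Finset.sum_eq_zero
        intro k _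
        unfold termF
        rw [if_neg]
        intro hcon
        have := hcon 0 (Nat.zero_le k)
        rw [walk_zero] at this
        exact hy this
      rw [MeasureTheory.lintegral_congr hz]
      simp

theorem Ffun_upper_pos (μ : Measure Ω) (X : ℕ → Ω → ℝ) (h : IsLaplaceWalk μ X)
    (L a b : ℝ) (hL : 0 < L) (hab : a < b)
    (hsub : Set.Icc a b ⊆ Set.Icc 0 L) (ρ : ℝ)
    (hρ : ρ ∈ Set.Ioo (0 : ℝ) (min (rhoStar L) (4 * Real.pi ^ 2 / (b - a) ^ 2)))
    (x : ℝ) (hx : x ∈ Set.Icc (0 : ℝ) L) :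
    Ffun μ X a b ρ L x ≤
      ENNReal.ofReal
        ((b - a) * (1 + ρ) * (4 * Real.pi ^ 2 / (4 * Real.pi ^ 2 - ρ * (b - a) ^ 2)) *
            ((Si2 (ρ * L ^ 2) 1 + (b + 1) / L) /
              ((1 - ρ) * Si2 (ρ * L ^ 2) 1 + 2 * Co2 (ρ * L ^ 2) 1 / L)) *
            (x + 1) +
          Qfun a b x) := by
  obtain ⟨hρ0, hρm⟩ := hρ
  have hρs : ρ < rhoStar L := lt_of_lt_of_le hρm (min_le_left _ _)
  have hρω : ρ < 4 * Real.pi ^ 2 / (b - a) ^ 2 := lt_of_lt_of_le hρm (min_le_right _ _)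
  have hGm := GG_measurable hρ0 hρs hL hab hsub
  have hGnn := GG_nonneg hρ0 hρs hL hab hsub
  have hGz := GG_zero hρ0 hρs hL hab hsub
  have hCb := GG_bound hρ0 hρs hL hab hsub
  have hsuper := GG_super hρ0 hρs hL hab hsub
  -- step 1 : F ≤ ofReal (GGf x)
  have hmain : Ffun μ X a b ρ L x ≤ ENNReal.ofReal (GGf a b ρ L x) := by
    have hmeasn : ∀ n, Measurable fun ω => ∑ k ∈ Finset.range n, termF a b ρ L X x k ω :=
      fun n => Finset.measurable_sum _ fun k _ => measurable_termF h.meas measurable_const k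
    have hmono : Monotone fun n (ω : Ω) => ∑ k ∈ Finset.range n, termF a b ρ L X x k ω := by
      intro m n hmn ω
      exact Finset.sum_le_sum_of_subset (Finset.range_subset_range.2 hmn)
    have h1 : Ffun μ X a b ρ L x =
        ⨆ n, ∫⁻ ω, ∑ k ∈ Finset.range n, termF a b ρ L X x k ω ∂μ := by
      rw [show Ffun μ X a b ρ L x = ∫⁻ ω, ∑' k, termF a b ρ L X x k ω ∂μ from rfl,
        ← MeasureTheory.lintegral_iSup hmeasn hmono]
      apply MeasureTheory.lintegral_congr
      intro ω
      exact ENNReal.tsum_eq_iSup_nat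
    rw [h1]
    apply iSup_le
    intro n
    exact main_ind a b ρ L hρ0.le (GGf a b ρ L) hGm hGnn hGz
      (fun y => lint_lap L (GGf a b ρ L) hGm hGnn hGz (2 + CCc a b ρ L * (L + 1)) hCb y)
      hsuper n μ X h x
  refine le_trans hmain (ENNReal.ofReal_le_ofReal ?_)
  -- step 2 : GGf x ≤ claimed bound
  have hr : 0 < Real.sqrt ρ := Real.sqrt_pos.2 hρ0
  have hDD := DD_pos hρ0 hρs hL
  have h0a : 0 ≤ a := ha0 hρ0 hρs hL hab hsub
  have hx1 : (0:ℝ) ≤ x + 1 := by linarith [hx.1]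
  have hπL := sqrtL_lt_pi hρ0 hρs hL
  have hSnn : 0 ≤ Real.sin (Real.sqrt ρ * L) :=
    Real.sin_nonneg_of_nonneg_of_le_pi (by positivity) (by linarith)
  have hSi : Si2 (ρ * L ^ 2) 1 = Real.sin (Real.sqrt ρ * L) / (Real.sqrt ρ * L) := by
    unfold Si2
    rw [if_pos (by positivity : (0:ℝ) < ρ * L ^ 2),
      show Real.sqrt (ρ * L ^ 2) = Real.sqrt ρ * L by
        rw [Real.sqrt_mul hρ0.le, Real.sqrt_sq hL.le],
      mul_one]
  have hCo : Co2 (ρ * L ^ 2) 1 = Real.cos (Real.sqrt ρ * L) := by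
    unfold Co2
    rw [if_pos (by positivity : (0:ℝ) < ρ * L ^ 2),
      show Real.sqrt (ρ * L ^ 2) = Real.sqrt ρ * L by
        rw [Real.sqrt_mul hρ0.le, Real.sqrt_sq hL.le],
      mul_one]
  have hden_eq : (1 - ρ) * Si2 (ρ * L ^ 2) 1 + 2 * Co2 (ρ * L ^ 2) 1 / L = DDc ρ L / L := by
    rw [hSi, hCo]
    unfold DDc
    field_simp
  have hnum_eq : Si2 (ρ * L ^ 2) 1 + (b + 1) / L =
      (Real.sin (Real.sqrt ρ * L) / Real.sqrt ρ + (b + 1)) / L := by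
    rw [hSi]
    field_simp
  have hratio : (Si2 (ρ * L ^ 2) 1 + (b + 1) / L) /
      ((1 - ρ) * Si2 (ρ * L ^ 2) 1 + 2 * Co2 (ρ * L ^ 2) 1 / L) =
      (Real.sin (Real.sqrt ρ * L) / Real.sqrt ρ + (b + 1)) / DDc ρ L := by
    rw [hnum_eq, hden_eq]
    rw [div_div_div_cancel_right₀]
    exact hL.ne'
  have hba2 : (0:ℝ) < (b - a) ^ 2 := pow_pos (sub_pos.2 hab) 2
  have h4 : 0 < 4 * Real.pi ^ 2 - ρ * (b - a) ^ 2 := by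
    rw [lt_div_iff₀ hba2] at hρω
    linarith
  have hK : (1:ℝ) ≤ 4 * Real.pi ^ 2 / (4 * Real.pi ^ 2 - ρ * (b - a) ^ 2) := by
    rw [le_div_iff₀ h4]
    nlinarith [mul_nonneg hρ0.le hba2.le]
  have hbase_nn : 0 ≤ (b - a) * (1 + ρ) *
      (Real.sin (Real.sqrt ρ * L) / Real.sqrt ρ + (b + 1)) / DDc ρ L := by
    apply div_nonneg _ hDD.le
    have h1 : 0 ≤ Real.sin (Real.sqrt ρ * L) / Real.sqrt ρ + (b + 1) :=
      add_nonneg (div_nonneg hSnn hr.le) (by linarith)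
    have h2 : (0:ℝ) ≤ b - a := by linarith
    positivity
  have hCC_le : CCc a b ρ L ≤
      (b - a) * (1 + ρ) * (4 * Real.pi ^ 2 / (4 * Real.pi ^ 2 - ρ * (b - a) ^ 2)) *
        ((Si2 (ρ * L ^ 2) 1 + (b + 1) / L) /
          ((1 - ρ) * Si2 (ρ * L ^ 2) 1 + 2 * Co2 (ρ * L ^ 2) 1 / L)) := by
    rw [hratio]
    calc CCc a b ρ L ≤ (b - a) * (1 + ρ) *
        (Real.sin (Real.sqrt ρ * L) / Real.sqrt ρ + (b + 1)) / DDc ρ L :=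
          CC_le_base hρ0 hρs hL hab hsub
      _ ≤ (4 * Real.pi ^ 2 / (4 * Real.pi ^ 2 - ρ * (b - a) ^ 2)) *
          ((b - a) * (1 + ρ) *
            (Real.sin (Real.sqrt ρ * L) / Real.sqrt ρ + (b + 1)) / DDc ρ L) := by
          nlinarith [mul_le_mul_of_nonneg_right hK hbase_nn]
      _ = (b - a) * (1 + ρ) * (4 * Real.pi ^ 2 / (4 * Real.pi ^ 2 - ρ * (b - a) ^ 2)) *
          ((Real.sin (Real.sqrt ρ * L) / Real.sqrt ρ + (b + 1)) / DDc ρ L) := by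
          ring
  have hphix : phiF a b ρ L x ≤ CCc a b ρ L * (x + 1) := by
    have hpp := ppf_nonpos hρ0 hρs hL hab hsub x hx
    have hff := ffA_le_add_one hρ0 hx.1
    have hCCnn := CC_nonneg hρ0 hρs hL hab hsub
    have h1 : CCc a b ρ L * ffA ρ x ≤ CCc a b ρ L * (x + 1) :=
      mul_le_mul_of_nonneg_left hff hCCnn
    unfold phiF
    linarith
  have hGGx : GGf a b ρ L x = Qfun a b x + phiF a b ρ L x := by
    unfold GGf
    rw [if_pos hx]
  rw [hGGx]
  have hfinal : phiF a b ρ L x ≤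
      (b - a) * (1 + ρ) * (4 * Real.pi ^ 2 / (4 * Real.pi ^ 2 - ρ * (b - a) ^ 2)) *
        ((Si2 (ρ * L ^ 2) 1 + (b + 1) / L) /
          ((1 - ρ) * Si2 (ρ * L ^ 2) 1 + 2 * Co2 (ρ * L ^ 2) 1 / L)) * (x + 1) := by
    calc phiF a b ρ L x ≤ CCc a b ρ L * (x + 1) := hphix
      _ ≤ _ := mul_le_mul_of_nonneg_right hCC_le hx1
  linarith
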